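/- arXiv:1907.08050 — 5 statements merged into one kernel-verified Lean document; each statement's English description precedes it below -/
import Mathlib

section
/- A (not necessarily finite) poset L is a well separated κ-lattice if and only if it is isomorphic to Pairs(→) for a two-acyclic factorization system (Ш, →, ↠, ↪). If so, (Ш, →, ↠, ↪) is isomorphic to (JIrr^c(L), →_L, ↠_L, ↪_L), and the map x ↦ ({j ∈ JIrr^c(L) : j ≤ x}, κᵈ({m ∈ MIrr^c(L) : m ≥ x})) is an order isomorphism from L to Pairs(→_L), with inverse (X,Y) ↦ ⋁X = ⋀(κ(Y)). -/
namespace SDL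

variable {S : Type*} {L : Type*}

/-- `X^⊥ = {y | x ↛ y for all x ∈ X}` -/
def perpR (r : S → S → Prop) (X : Set S) : Set S := {y | ∀ x ∈ X, ¬ r x y}

/-- `^⊥Y = {x | x ↛ y for all y ∈ Y}` -/
def perpL (r : S → S → Prop) (Y : Set S) : Set S := {x | ∀ y ∈ Y, ¬ r x y}

/-- `(X, Y)` is a maximal orthogonal pair for `r`. -/
def IsMOP (r : S → S → Prop) (X Y : Set S) : Prop := Y = perpR r X ∧ X = perpL r Y

/-- The set of maximal orthogonal pairs. -/
def Pairs (r : S → S → Prop) : Type _ := {p : Set S × Set S // IsMOP r p.1 p.2}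

/-- `Pairs r` is ordered by containment in the first component. -/
instance (r : S → S → Prop) : PartialOrder (Pairs r) where
  le p q := p.val.1 ⊆ q.val.1
  le_refl _ := Set.Subset.rfl
  le_trans _ _ _ h h' := Set.Subset.trans h h'
  le_antisymm p q h h' := by
    apply Subtype.ext
    have h1 : p.val.1 = q.val.1 := subset_antisymm h h'
    have h2 : p.val.2 = q.val.2 := by rw [p.prop.1, q.prop.1, h1]
    exact Prod.ext h1 h2

/-- `x ↠ y` iff for all `z`, `y → z` implies `x → z`. -/
def Onto (r : S → S → Prop) (x y : S) : Prop := ∀ z, r y z → r x z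

/-- `x ↪ y` iff for all `z`, `z → x` implies `z → y`. -/
def Into (r : S → S → Prop) (x y : S) : Prop := ∀ z, r z x → r z y

/-- `Mult ↠ ↪` relates `x` to `z` iff `x ↠ y ↪ z` for some `y`. -/
def Mult (ont inj : S → S → Prop) (x z : S) : Prop := ∃ y, ont x y ∧ inj y z

/-- `(S, r, ont, inj)` is a factorization system. -/
structure IsFactSystem (r ont inj : S → S → Prop) : Prop where
  refl : ∀ x, r x x
  onto_iff : ∀ x y, ont x y ↔ Onto r x y
  into_iff : ∀ x y, inj x y ↔ Into r x y
  mult_iff : ∀ x z, r x z ↔ Mult ont inj x z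

/-- A two-acyclic factorization system. -/
structure IsTwoAcyclicFS (r ont inj : S → S → Prop) extends IsFactSystem r ont inj : Prop where
  onto_antisymm : ∀ x y, ont x y → ont y x → x = y
  into_antisymm : ∀ x y, inj x y → inj y x → x = y
  brick : ∀ x y, ont x y → inj y x → x = y

/-- `T(x) = {x' | x ↠ x'}`. -/
def Tset (ont : S → S → Prop) (x : S) : Set S := {x' | ont x x'}

/-- `F(x) = {x' | x' ↪ x}`. -/
def Fset (inj : S → S → Prop) (x : S) : Set S := {x' | inj x' x}

/-- Restriction of a relation to a subset. -/
def restrictRel (r : S → S → Prop) (D : Set S) : D → D → Prop := fun a b => r a b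

/-- A subset is closed if it equals its closure `^⊥(X^⊥)`. -/
def IsClosedSet (r : S → S → Prop) (X : Set S) : Prop := perpL r (perpR r X) = X

/-- The lattice of closed sets, ordered by containment. -/
abbrev Closeds (r : S → S → Prop) : Type _ := {X : Set S // IsClosedSet r X}

/-- `Del(X, c) = X \ {x ∈ X : x ↠ c}`. -/
def Del (ont : S → S → Prop) (X : Set S) (c : S) : Set S := X \ {x | ont x c}

/-- `Cov(X)`: those `c ∈ X` with `Del(X,c)` closed and the closure of `Del(X,c) ∪ {c}` equal
to `X`. -/
def CovS (r ont : S → S → Prop) (X : Set S) : Set S :=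
  {c | c ∈ X ∧ IsClosedSet r (Del ont X c) ∧ perpL r (perpR r (Del ont X c ∪ {c})) = X}

/-- Direct forcing: `x ⇝ y` iff `x` is `↠`-minimal in `F(y)` or `↪`-maximal in `T(y)`. -/
def Forces (ont inj : S → S → Prop) (x y : S) : Prop :=
  (inj x y ∧ ∀ x', inj x' y → ont x x' → x' = x) ∨
  (ont y x ∧ ∀ x', ont y x' → inj x' x → x' = x)

/-- `down X` for a partial order given as a relation (`r x y` meaning `x ≥ y`). -/
def dnRel (r : S → S → Prop) (X : Set S) : Set S := {y | ∃ x ∈ X, r x y}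

/-- `up X` for a partial order given as a relation (`r x y` meaning `x ≥ y`). -/
def upRel (r : S → S → Prop) (X : Set S) : Set S := {y | ∃ x ∈ X, r y x}

section OrderNotions

variable [PartialOrder L]

/-- Completely join-irreducible: there is `j⁎` such that `x < j ↔ x ≤ j⁎`. -/
def CJIrr (j : L) : Prop := ∃ j', ∀ x : L, x < j ↔ x ≤ j'

/-- Completely meet-irreducible: there is `j^*` such that `x > m ↔ x ≥ m^*`. -/
def CMIrr (m : L) : Prop := ∃ m', ∀ x : L, m < x ↔ m' ≤ x

/-- `k = κ(j)`: `k` is the greatest element of `{y | j ⊓ y = j⁎}`. -/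
def IsKappa (j k : L) : Prop :=
  ∃ j', (∀ x : L, x < j ↔ x ≤ j') ∧ IsGreatest {y : L | IsGLB ({j, y} : Set L) j'} k

/-- `k = κᵈ(m)`: `k` is the least element of `{x | m ⊔ x = m^*}`. -/
def IsKappad (m k : L) : Prop :=
  ∃ m', (∀ x : L, m < x ↔ m' ≤ x) ∧ IsLeast {x : L | IsLUB ({m, x} : Set L) m'} k

/-- `L` is a κ-lattice: complete, meet and join generated by irreducibles, with inverse
bijections `κ` and `κᵈ` between the completely join- and meet-irreducibles. -/
def IsKappaLattice (L : Type*) [PartialOrder L] : Prop :=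
  (∀ s : Set L, ∃ a, IsLUB s a) ∧
  (∀ s : Set L, ∃ a, IsGLB s a) ∧
  (∀ x : L, IsLUB {j : L | CJIrr j ∧ j ≤ x} x) ∧
  (∀ x : L, IsGLB {m : L | CMIrr m ∧ x ≤ m} x) ∧
  (∀ j : L, CJIrr j → ∃ k, IsKappa j k ∧ CMIrr k ∧ IsKappad k j) ∧
  (∀ m : L, CMIrr m → ∃ k, IsKappad m k ∧ CJIrr k ∧ IsKappa k m)

/-- Well separated: `z₁ ≰ z₂` implies some completely join-irreducible `j` has `j ≤ z₁` and
`κ(j) ≥ z₂`. -/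
def WellSeparated (L : Type*) [PartialOrder L] : Prop :=
  ∀ z₁ z₂ : L, ¬ z₁ ≤ z₂ → ∃ j k : L, CJIrr j ∧ IsKappa j k ∧ j ≤ z₁ ∧ z₂ ≤ k

/-- The set of completely join-irreducible elements, as a type. -/
abbrev JIrrC (L : Type*) [PartialOrder L] : Type _ := {j : L // CJIrr j}

/-- `i →_L j` iff `i ≰ κ(j)`. -/
def toL (i j : JIrrC L) : Prop := ∃ k : L, IsKappa (j : L) k ∧ ¬ (i : L) ≤ k

/-- `i ↠_L j` iff `i ≥ j` in `L`. -/
def ontoL (i j : JIrrC L) : Prop := (j : L) ≤ (i : L)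

/-- `i ↪_L j` iff `κ(i) ≥ κ(j)` in `L`. -/
def intoL (i j : JIrrC L) : Prop :=
  ∃ ki kj : L, IsKappa (i : L) ki ∧ IsKappa (j : L) kj ∧ kj ≤ ki

/-- A poset is a semidistributive lattice (order-theoretically): binary joins and meets exist,
and both semidistributive laws hold. -/
def IsSDLattice (L : Type*) [PartialOrder L] : Prop :=
  (∀ x y : L, ∃ s, IsLUB ({x, y} : Set L) s) ∧
  (∀ x y : L, ∃ s, IsGLB ({x, y} : Set L) s) ∧
  (∀ x y z sxy sxz myz : L, IsLUB ({x, y} : Set L) sxy → IsLUB ({x, z} : Set L) sxz →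
    sxy = sxz → IsGLB ({y, z} : Set L) myz → IsLUB ({x, myz} : Set L) sxy) ∧
  (∀ x y z mxy mxz syz : L, IsGLB ({x, y} : Set L) mxy → IsGLB ({x, z} : Set L) mxz →
    mxy = mxz → IsLUB ({y, z} : Set L) syz → IsGLB ({x, syz} : Set L) mxy)

/-- `s` is the canonical join representation of `x`. -/
def IsCanonicalJoinRep (s : Set L) (x : L) : Prop :=
  IsLUB s x ∧ (∀ s' : Set L, IsLUB s' x → ∀ a ∈ s, ∃ b ∈ s', a ≤ b) ∧
  IsAntichain (· ≤ ·) s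

end OrderNotions

/-- Join semidistributivity. -/
def JoinSD (L : Type*) [Lattice L] : Prop :=
  ∀ x y z : L, x ⊔ y = x ⊔ z → x ⊔ (y ⊓ z) = x ⊔ y

/-- Meet semidistributivity. -/
def MeetSD (L : Type*) [Lattice L] : Prop :=
  ∀ x y z : L, x ⊓ y = x ⊓ z → x ⊓ (y ⊔ z) = x ⊓ y

/-- Complete join semidistributivity. -/
def CompletelyJoinSD (L : Type*) [CompleteLattice L] : Prop :=
  ∀ (X : Set L) (y z : L), X.Nonempty → (∀ x ∈ X, x ⊔ y = z) → sInf X ⊔ y = z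

/-- Complete meet semidistributivity. -/
def CompletelyMeetSD (L : Type*) [CompleteLattice L] : Prop :=
  ∀ (X : Set L) (y z : L), X.Nonempty → (∀ x ∈ X, x ⊓ y = z) → sSup X ⊓ y = z

end SDL
namespace SDL

section Uniq

variable {L : Type*} [PartialOrder L]

theorem star_unique {j a b : L} (ha : ∀ x : L, x < j ↔ x ≤ a) (hb : ∀ x : L, x < j ↔ x ≤ b) :
    a = b :=
  le_antisymm ((hb a).1 ((ha a).2 le_rfl)) ((ha b).1 ((hb b).2 le_rfl))

theorem isKappa_unique {j k k' : L} (h : IsKappa j k) (h' : IsKappa j k') : k = k' := by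
  obtain ⟨a, ha, hk⟩ := h
  obtain ⟨b, hb, hk'⟩ := h'
  rw [star_unique ha hb] at hk
  exact le_antisymm (hk'.2 hk.1) (hk.2 hk'.1)

theorem costar_unique {m a b : L} (ha : ∀ x : L, m < x ↔ a ≤ x) (hb : ∀ x : L, m < x ↔ b ≤ x) :
    a = b :=
  le_antisymm ((ha b).1 ((hb b).2 le_rfl)) ((hb a).1 ((ha a).2 le_rfl))

theorem isKappad_unique {m k k' : L} (h : IsKappad m k) (h' : IsKappad m k') : k = k' := by
  obtain ⟨a, ha, hk⟩ := h
  obtain ⟨b, hb, hk'⟩ := h'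
  rw [costar_unique ha hb] at hk
  exact le_antisymm (hk.2 hk'.1) (hk'.2 hk.1)

end Uniq

section Transfer

variable {L : Type*} {M : Type*} [PartialOrder L] [PartialOrder M]

theorem cjirr_map (f : L ≃o M) {j : L} (h : CJIrr j) : CJIrr (f j) := by
  obtain ⟨j', hj'⟩ := h
  refine ⟨f j', fun x => ?_⟩
  rw [← f.apply_symm_apply x, f.lt_iff_lt, f.le_iff_le]
  exact hj' _

theorem cmirr_map (f : L ≃o M) {m : L} (h : CMIrr m) : CMIrr (f m) := by
  obtain ⟨m', hm'⟩ := h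
  refine ⟨f m', fun x => ?_⟩
  rw [← f.apply_symm_apply x, f.lt_iff_lt, f.le_iff_le]
  exact hm' _

theorem isGLB_pair_map (f : L ≃o M) {a b c : L} : IsGLB ({f a, f b} : Set M) (f c) ↔ IsGLB ({a, b} : Set L) c := by
  rw [← Set.image_pair, f.isGLB_image, f.symm_apply_apply]

theorem isLUB_pair_map (f : L ≃o M) {a b c : L} : IsLUB ({f a, f b} : Set M) (f c) ↔ IsLUB ({a, b} : Set L) c := by
  rw [← Set.image_pair, f.isLUB_image, f.symm_apply_apply]

theorem isKappa_map (f : L ≃o M) {j k : L} (h : IsKappa j k) : IsKappa (f j) (f k) := by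
  obtain ⟨j', hj', hks, hkg⟩ := h
  refine ⟨f j', fun x => ?_, (isGLB_pair_map f).2 hks, fun z hz => ?_⟩
  · rw [← f.apply_symm_apply x, f.lt_iff_lt, f.le_iff_le]; exact hj' _
  · rw [← f.apply_symm_apply z, f.le_iff_le]
    refine hkg ?_
    rw [Set.mem_setOf_eq, ← isGLB_pair_map f, f.apply_symm_apply]
    exact hz

theorem isKappad_map (f : L ≃o M) {m k : L} (h : IsKappad m k) : IsKappad (f m) (f k) := by
  obtain ⟨m', hm', hks, hkg⟩ := h
  refine ⟨f m', fun x => ?_, (isLUB_pair_map f).2 hks, fun z hz => ?_⟩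
  · rw [← f.apply_symm_apply x, f.lt_iff_lt, f.le_iff_le]; exact hm' _
  · rw [← f.apply_symm_apply z, f.le_iff_le]
    refine hkg ?_
    rw [Set.mem_setOf_eq, ← isLUB_pair_map f, f.apply_symm_apply]
    exact hz

theorem isKappaLattice_map (f : L ≃o M) (hM : IsKappaLattice M) : IsKappaLattice L := by
  obtain ⟨hlub, hglb, hjgen, hmgen, hk5, hk6⟩ := hM
  refine ⟨fun s => ?_, fun s => ?_, fun x => ?_, fun x => ?_, fun j hj => ?_, fun m hm => ?_⟩
  · obtain ⟨a, ha⟩ := hlub (f '' s)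
    exact ⟨f.symm a, (f.isLUB_image).1 (by simpa using ha)⟩
  · obtain ⟨a, ha⟩ := hglb (f '' s)
    exact ⟨f.symm a, (f.isGLB_image).1 (by simpa using ha)⟩
  · have h := hjgen (f x)
    have himg : f '' {j : L | CJIrr j ∧ j ≤ x} = {j : M | CJIrr j ∧ j ≤ f x} := by
      ext y
      constructor
      · rintro ⟨j, ⟨hj1, hj2⟩, rfl⟩
        exact ⟨cjirr_map f hj1, f.le_iff_le.2 hj2⟩
      · rintro ⟨hy1, hy2⟩
        refine ⟨f.symm y, ⟨?_, ?_⟩, f.apply_symm_apply y⟩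
        · have := cjirr_map f.symm hy1
          simpa using this
        · rw [← f.le_iff_le, f.apply_symm_apply]; exact hy2
    have := f.isLUB_image (s := {j : L | CJIrr j ∧ j ≤ x}) (x := f x)
    rw [himg] at this
    simpa using this.1 h
  · have h := hmgen (f x)
    have himg : f '' {m : L | CMIrr m ∧ x ≤ m} = {m : M | CMIrr m ∧ f x ≤ m} := by
      ext y
      constructor
      · rintro ⟨j, ⟨hj1, hj2⟩, rfl⟩
        exact ⟨cmirr_map f hj1, f.le_iff_le.2 hj2⟩
      · rintro ⟨hy1, hy2⟩
        refine ⟨f.symm y, ⟨?_, ?_⟩, f.apply_symm_apply y⟩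
        · have := cmirr_map f.symm hy1
          simpa using this
        · rw [← f.le_iff_le, f.apply_symm_apply]; exact hy2
    have := f.isGLB_image (s := {m : L | CMIrr m ∧ x ≤ m}) (x := f x)
    rw [himg] at this
    simpa using this.1 h
  · obtain ⟨k, hk1, hk2, hk3⟩ := hk5 (f j) (cjirr_map f hj)
    refine ⟨f.symm k, ?_, ?_, ?_⟩
    · have := isKappa_map f.symm hk1
      simpa using this
    · have := cmirr_map f.symm hk2
      simpa using this
    · have := isKappad_map f.symm hk3
      simpa using this
  · obtain ⟨k, hk1, hk2, hk3⟩ := hk6 (f m) (cmirr_map f hm)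
    refine ⟨f.symm k, ?_, ?_, ?_⟩
    · have := isKappad_map f.symm hk1
      simpa using this
    · have := cjirr_map f.symm hk2
      simpa using this
    · have := isKappa_map f.symm hk3
      simpa using this

theorem wellSeparated_map (f : L ≃o M) (hM : WellSeparated M) : WellSeparated L := by
  intro z1 z2 hn
  obtain ⟨j, k, hj, hk, hjz, hzk⟩ := hM (f z1) (f z2) (by rwa [f.le_iff_le])
  refine ⟨f.symm j, f.symm k, by simpa using cjirr_map f.symm hj, by simpa using isKappa_map f.symm hk, ?_, ?_⟩
  · rw [← f.le_iff_le, f.apply_symm_apply]; exact hjz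
  · rw [← f.le_iff_le, f.apply_symm_apply]; exact hzk

end Transfer

end SDL
namespace SDL

section PairsSide

variable {S : Type*} {r ont inj : S → S → Prop}

theorem perpR_anti {X X' : Set S} (h : X ⊆ X') : perpR r X' ⊆ perpR r X :=
  fun _ hy x hx => hy x (h hx)

theorem perpL_anti {Y Y' : Set S} (h : Y ⊆ Y') : perpL r Y' ⊆ perpL r Y :=
  fun _ hx y hy => hx y (h hy)

theorem subset_perpL_perpR (X : Set S) : X ⊆ perpL r (perpR r X) :=
  fun x hx y hy => hy x hx

theorem subset_perpR_perpL (Y : Set S) : Y ⊆ perpR r (perpL r Y) :=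
  fun y hy x hx => hx y hy

theorem perpR_perpL_perpR (X : Set S) : perpR r (perpL r (perpR r X)) = perpR r X :=
  le_antisymm (perpR_anti (subset_perpL_perpR X)) (subset_perpR_perpL _)

theorem perpL_perpR_perpL (Y : Set S) : perpL r (perpR r (perpL r Y)) = perpL r Y :=
  le_antisymm (perpL_anti (subset_perpR_perpL Y)) (subset_perpL_perpR _)

theorem isClosed_perpL (Y : Set S) : IsClosedSet r (perpL r Y) := perpL_perpR_perpL Y

theorem isClosed_inter {X X' : Set S} (h : IsClosedSet r X) (h' : IsClosedSet r X') :
    IsClosedSet r (X ∩ X') := by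
  refine le_antisymm (fun z hz => ?_) (subset_perpL_perpR _)
  constructor
  · rw [← h]; exact perpL_anti (perpR_anti Set.inter_subset_left) hz
  · rw [← h']; exact perpL_anti (perpR_anti Set.inter_subset_right) hz

/-- Build a pair from a closed set. -/
def mkPair (X : Set S) (hX : IsClosedSet r X) : Pairs r := ⟨(X, perpR r X), rfl, hX.symm⟩

/-- Build a pair from a right-closed set (as second component). -/
def mkPair' (Y : Set S) (hY : perpR r (perpL r Y) = Y) : Pairs r := ⟨(perpL r Y, Y), hY.symm, rfl⟩

theorem snd_eq (p : Pairs r) : p.val.2 = perpR r p.val.1 := p.prop.1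
theorem fst_eq (p : Pairs r) : p.val.1 = perpL r p.val.2 := p.prop.2

theorem pairs_le_def {p q : Pairs r} : p ≤ q ↔ p.val.1 ⊆ q.val.1 := Iff.rfl

theorem pairs_le_iff_snd {p q : Pairs r} : p ≤ q ↔ q.val.2 ⊆ p.val.2 := by
  constructor
  · intro h
    rw [snd_eq p, snd_eq q]
    exact perpR_anti h
  · intro h
    rw [pairs_le_def, fst_eq p, fst_eq q]
    exact perpL_anti h

theorem pairs_ext {p q : Pairs r} (h : p.val.1 = q.val.1) : p = q :=
  le_antisymm (pairs_le_def.2 h.le) (pairs_le_def.2 h.ge)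

theorem pairs_ext' {p q : Pairs r} (h : p.val.2 = q.val.2) : p = q :=
  le_antisymm (pairs_le_iff_snd.2 h.ge) (pairs_le_iff_snd.2 h.le)

theorem not_r_of_mem {p : Pairs r} {x y : S} (hx : x ∈ p.val.1) (hy : y ∈ p.val.2) : ¬ r x y := by
  rw [snd_eq p] at hy
  exact hy x hx

variable (hFS : IsTwoAcyclicFS r ont inj)
include hFS

theorem ont_refl (x : S) : ont x x := (hFS.onto_iff x x).2 fun _ h => h
theorem inj_refl (x : S) : inj x x := (hFS.into_iff x x).2 fun _ h => h

theorem ont_trans {x y z : S} (h : ont x y) (h' : ont y z) : ont x z :=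
  (hFS.onto_iff x z).2 fun w hw => (hFS.onto_iff x y).1 h w ((hFS.onto_iff y z).1 h' w hw)

theorem inj_trans {x y z : S} (h : inj x y) (h' : inj y z) : inj x z :=
  (hFS.into_iff x z).2 fun w hw => (hFS.into_iff y z).1 h' w ((hFS.into_iff x y).1 h w hw)

theorem r_of_ont {x y : S} (h : ont x y) : r x y := (hFS.onto_iff x y).1 h y (hFS.refl y)
theorem r_of_inj {x y : S} (h : inj x y) : r x y := (hFS.into_iff x y).1 h x (hFS.refl x)

theorem r_of_ont_r {x y z : S} (h : ont x y) (h' : r y z) : r x z := (hFS.onto_iff x y).1 h z h'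
theorem r_of_r_inj {x y z : S} (h : r x y) (h' : inj y z) : r x z := (hFS.into_iff y z).1 h' x h

theorem r_factor {x z : S} (h : r x z) : ∃ y, ont x y ∧ inj y z := (hFS.mult_iff x z).1 h

theorem fst_mem_of_ont {p : Pairs r} {x z : S} (hx : x ∈ p.val.1) (h : ont x z) : z ∈ p.val.1 := by
  rw [fst_eq p] at hx ⊢
  exact fun y hy hrzy => hx y hy (r_of_ont_r hFS h hrzy)

theorem snd_mem_of_inj {p : Pairs r} {y w : S} (hy : y ∈ p.val.2) (h : inj w y) : w ∈ p.val.2 := by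
  rw [snd_eq p] at hy ⊢
  exact fun x hx hrxw => hy x hx (r_of_r_inj hFS hrxw h)

theorem perpR_Tset (x : S) : perpR r {z | ont x z} = {y | ¬ r x y} := by
  ext y
  constructor
  · intro hy
    exact hy x (ont_refl hFS x)
  · intro hy z hz hr
    exact hy (r_of_ont_r hFS hz hr)

theorem perpL_notr (x : S) : perpL r {y | ¬ r x y} = {z | ont x z} := by
  ext z
  constructor
  · intro hz
    refine (hFS.onto_iff x z).2 fun w hw => ?_
    by_contra hxw
    exact hz w hxw hw
  · intro hz y hy hr
    exact hy (r_of_ont_r hFS hz hr)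

theorem perpR_notr (x : S) : perpR r {z | ¬ r z x} = {z | inj z x} := by
  ext y
  constructor
  · intro hy
    refine (hFS.into_iff y x).2 fun w hw => ?_
    by_contra hwx
    exact hy w hwx hw
  · intro hy z hz hr
    exact hz (r_of_r_inj hFS hr hy)

theorem perpL_Fset (x : S) : perpL r {z | inj z x} = {z | ¬ r z x} := by
  ext w
  constructor
  · intro hw
    exact hw x (inj_refl hFS x)
  · intro hw z hz hr
    exact hw (r_of_r_inj hFS hr hz)

/-- The join-irreducible pair associated to `x`. -/
def jpair (x : S) : Pairs r :=
  ⟨({z | ont x z}, {y | ¬ r x y}), (perpR_Tset hFS x).symm, (perpL_notr hFS x).symm⟩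

/-- The meet-irreducible pair associated to `x`. -/
def mpair (x : S) : Pairs r :=
  ⟨({z | ¬ r z x}, {z | inj z x}), (perpR_notr hFS x).symm, (perpL_Fset hFS x).symm⟩

theorem jpair_le_iff {x : S} {p : Pairs r} : jpair hFS x ≤ p ↔ x ∈ p.val.1 := by
  constructor
  · intro h
    exact h (ont_refl hFS x)
  · intro h z hz
    exact fst_mem_of_ont hFS h hz

theorem le_mpair_iff {x : S} {p : Pairs r} : p ≤ mpair hFS x ↔ x ∈ p.val.2 := by
  rw [pairs_le_iff_snd]
  constructor
  · intro h
    exact h (inj_refl hFS x)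
  · intro h z hz
    exact snd_mem_of_inj hFS h hz

theorem jpair_le_mpair_iff {x y : S} : jpair hFS x ≤ mpair hFS y ↔ ¬ r x y :=
  jpair_le_iff hFS

theorem jpair_injective {x y : S} (h : jpair hFS x = jpair hFS y) : x = y := by
  have h1 : ({z | ont x z} : Set S) = {z | ont y z} := congrArg (fun p : Pairs r => p.val.1) h
  have hxy : ont y x := (h1.le (ont_refl hFS x) : ont y x)
  have hyx : ont x y := (h1.ge (ont_refl hFS y) : ont x y)
  exact hFS.onto_antisymm x y hyx hxy

theorem mpair_injective {x y : S} (h : mpair hFS x = mpair hFS y) : x = y := by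
  have h1 : ({z | inj z x} : Set S) = {z | inj z y} := congrArg (fun p : Pairs r => p.val.2) h
  have hxy : inj x y := (h1.le (inj_refl hFS x) : inj x y)
  have hyx : inj y x := (h1.ge (inj_refl hFS y) : inj y x)
  exact hFS.into_antisymm x y hxy hyx

/-- The pair `(jpair x)_*`. -/
def jstar (x : S) : Pairs r :=
  mkPair ({z | ont x z} ∩ {z | ¬ r z x})
    (isClosed_inter (by rw [← perpL_notr hFS x]; exact isClosed_perpL _)
      (by rw [← perpL_Fset hFS x]; exact isClosed_perpL _))

theorem jstar_fst (x : S) : (jstar hFS x).val.1 = {z | ont x z} ∩ {z | ¬ r z x} := rfl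

theorem lt_jpair_iff {x : S} {p : Pairs r} : p < jpair hFS x ↔ p ≤ jstar hFS x := by
  constructor
  · intro hlt
    have hle : p.val.1 ⊆ {z | ont x z} := hlt.le
    have hx : x ∉ p.val.1 := by
      intro hx
      exact hlt.ne (le_antisymm hlt.le ((jpair_le_iff hFS).2 hx))
    intro z hz
    refine ⟨hle hz, fun hr => ?_⟩
    obtain ⟨m, hm1, hm2⟩ := r_factor hFS hr
    have hxm : ont x m := ont_trans hFS (hle hz) hm1
    have hmx : x = m := hFS.brick x m hxm hm2
    subst hmx
    exact hx (fst_mem_of_ont hFS hz hm1)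
  · intro hle
    have h1 : p ≤ jpair hFS x := fun z hz => (hle hz).1
    refine lt_of_le_of_ne h1 fun he => ?_
    have : x ∈ p.val.1 := by rw [he]; exact ont_refl hFS x
    exact (hle this).2 (hFS.refl x)

theorem cjirr_jpair (x : S) : CJIrr (jpair hFS x) := ⟨jstar hFS x, fun _ => lt_jpair_iff hFS⟩

/-- The pair `(mpair x)^*`. -/
def mstar (x : S) : Pairs r :=
  mkPair' ({z | inj z x} ∩ {y | ¬ r x y})
    (by
      have : ({z | inj z x} ∩ {y | ¬ r x y} : Set S) =
          perpR r ({z | ¬ r z x} ∪ {z | ont x z}) := by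
        rw [← perpR_notr hFS x, ← perpR_Tset hFS x]
        ext y
        simp only [perpR, Set.mem_union, Set.mem_inter_iff, Set.mem_setOf_eq]
        constructor
        · rintro ⟨h1, h2⟩ z (hz | hz)
          · exact h1 z hz
          · exact h2 z hz
        · intro h
          exact ⟨fun z hz => h z (Or.inl hz), fun z hz => h z (Or.inr hz)⟩
      rw [this, perpR_perpL_perpR])

theorem mstar_snd (x : S) : (mstar hFS x).val.2 = {z | inj z x} ∩ {y | ¬ r x y} := rfl

theorem mpair_lt_iff {x : S} {p : Pairs r} : mpair hFS x < p ↔ mstar hFS x ≤ p := by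
  rw [pairs_le_iff_snd (q := p), mstar_snd]
  constructor
  · intro hlt
    have hle : p.val.2 ⊆ {z | inj z x} := pairs_le_iff_snd.1 hlt.le
    have hx : x ∉ p.val.2 := by
      intro hx
      exact hlt.ne (le_antisymm hlt.le ((le_mpair_iff hFS).2 hx))
    intro w hw
    refine ⟨hle hw, fun hr => ?_⟩
    obtain ⟨n, hn1, hn2⟩ := r_factor hFS hr
    have hnx : inj n x := inj_trans hFS hn2 (hle hw)
    have hxn : x = n := hFS.brick x n hn1 hnx
    subst hxn
    exact hx (snd_mem_of_inj hFS hw hn2)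
  · intro hle
    have h1 : mpair hFS x ≤ p := pairs_le_iff_snd.2 fun z hz => (hle hz).1
    refine lt_of_le_of_ne h1 fun he => ?_
    have : x ∈ p.val.2 := by rw [← he]; exact inj_refl hFS x
    exact (hle this).2 (hFS.refl x)

theorem cmirr_mpair (x : S) : CMIrr (mpair hFS x) := ⟨mstar hFS x, fun _ => mpair_lt_iff hFS⟩
omit hFS in
theorem fst_closed (p : Pairs r) : IsClosedSet r p.val.1 := by
  rw [fst_eq p]; exact isClosed_perpL _

omit hFS in
theorem perpR_union (A B : Set S) : perpR r (A ∪ B) = perpR r A ∩ perpR r B := by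
  ext y
  constructor
  · intro hy
    exact ⟨fun x hx => hy x (Or.inl hx), fun x hx => hy x (Or.inr hx)⟩
  · rintro ⟨h1, h2⟩ x (hx | hx)
    · exact h1 x hx
    · exact h2 x hx

/-- Binary meet of pairs. -/
def pairInf (p q : Pairs r) : Pairs r :=
  mkPair (p.val.1 ∩ q.val.1) (isClosed_inter (fst_closed p) (fst_closed q))

omit hFS in
theorem isGLB_pairInf (p q : Pairs r) : IsGLB ({p, q} : Set (Pairs r)) (pairInf p q) := by
  constructor
  · rintro z (rfl | rfl)
    · exact pairs_le_def.2 Set.inter_subset_left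
    · exact pairs_le_def.2 Set.inter_subset_right
  · intro z hz
    exact pairs_le_def.2 (Set.subset_inter (hz (Set.mem_insert _ _))
      (hz (Set.mem_insert_of_mem _ rfl)))

/-- Binary join of pairs. -/
def pairSup (p q : Pairs r) : Pairs r :=
  mkPair' (p.val.2 ∩ q.val.2) (by
    have h : p.val.2 ∩ q.val.2 = perpR r (p.val.1 ∪ q.val.1) := by
      rw [snd_eq p, snd_eq q, perpR_union]
    rw [h, perpR_perpL_perpR])

omit hFS in
theorem isLUB_pairSup (p q : Pairs r) : IsLUB ({p, q} : Set (Pairs r)) (pairSup p q) := by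
  constructor
  · rintro z (rfl | rfl)
    · exact pairs_le_iff_snd.2 Set.inter_subset_left
    · exact pairs_le_iff_snd.2 Set.inter_subset_right
  · intro z hz
    exact pairs_le_iff_snd.2 (Set.subset_inter (pairs_le_iff_snd.1 (hz (Set.mem_insert _ _)))
      (pairs_le_iff_snd.1 (hz (Set.mem_insert_of_mem _ rfl))))

theorem isKappa_jpair (x : S) : IsKappa (jpair hFS x) (mpair hFS x) := by
  refine ⟨jstar hFS x, fun p => lt_jpair_iff hFS, ?_, ?_⟩
  · show IsGLB _ _
    have h : pairInf (jpair hFS x) (mpair hFS x) = jstar hFS x := pairs_ext rfl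
    rw [← h]
    exact isGLB_pairInf _ _
  · intro y hy
    have heq : (jstar hFS x).val.1 = (jpair hFS x).val.1 ∩ y.val.1 :=
      congrArg (fun p : Pairs r => p.val.1) (hy.unique (isGLB_pairInf _ _))
    rw [le_mpair_iff hFS, snd_eq y]
    intro z hz hrzx
    obtain ⟨m, hm1, hm2⟩ := r_factor hFS hrzx
    have hmy : m ∈ y.val.1 := fst_mem_of_ont hFS hz hm1
    have hxy : x ∉ y.val.1 := fun hx =>
      (heq.ge (⟨ont_refl hFS x, hx⟩ : x ∈ (jpair hFS x).val.1 ∩ y.val.1)).2 (hFS.refl x)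
    obtain ⟨u, hu, hru⟩ : ∃ u ∈ y.val.2, r x u := by
      by_contra hc
      push_neg at hc
      apply hxy
      rw [fst_eq y]
      exact fun u hu => hc u hu
    obtain ⟨n, hn1, hn2⟩ := r_factor hFS hru
    by_cases hnx : r n x
    · obtain ⟨k, hk1, hk2⟩ := r_factor hFS hnx
      have hxk : x = k := hFS.brick x k (ont_trans hFS hn1 hk1) hk2
      subst hxk
      have hnxeq : n = x := hFS.onto_antisymm n x hk1 hn1
      subst hnxeq
      exact not_r_of_mem hmy hu (r_of_inj hFS (inj_trans hFS hm2 hn2))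
    · have hnD : n ∈ (jstar hFS x).val.1 := ⟨hn1, hnx⟩
      exact not_r_of_mem (heq.le hnD).2 hu (r_of_inj hFS hn2)

theorem isKappad_mpair (x : S) : IsKappad (mpair hFS x) (jpair hFS x) := by
  refine ⟨mstar hFS x, fun p => mpair_lt_iff hFS, ?_, ?_⟩
  · show IsLUB _ _
    have h : pairSup (mpair hFS x) (jpair hFS x) = mstar hFS x := pairs_ext' rfl
    rw [← h]
    exact isLUB_pairSup _ _
  · intro q hq
    have heq : (mstar hFS x).val.2 = (mpair hFS x).val.2 ∩ q.val.2 :=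
      congrArg (fun p : Pairs r => p.val.2) (hq.unique (isLUB_pairSup _ _))
    rw [jpair_le_iff hFS, fst_eq q]
    intro w hw hrxw
    obtain ⟨n, hn1, hn2⟩ := r_factor hFS hrxw
    have hnq : n ∈ q.val.2 := snd_mem_of_inj hFS hw hn2
    have hxq : x ∉ q.val.2 := fun hx =>
      (heq.ge (⟨inj_refl hFS x, hx⟩ : x ∈ (mpair hFS x).val.2 ∩ q.val.2)).2 (hFS.refl x)
    obtain ⟨u, hu, hru⟩ : ∃ u ∈ q.val.1, r u x := by
      by_contra hc
      push_neg at hc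
      apply hxq
      rw [snd_eq q]
      exact fun u hu => hc u hu
    obtain ⟨k, hk1, hk2⟩ := r_factor hFS hru
    by_cases hxk : r x k
    · obtain ⟨i, hi1, hi2⟩ := r_factor hFS hxk
      have hxi : x = i := hFS.brick x i hi1 (inj_trans hFS hi2 hk2)
      subst hxi
      have hkx : k = x := hFS.into_antisymm k x hk2 hi2
      subst hkx
      exact not_r_of_mem hu hnq (r_of_ont hFS (ont_trans hFS hk1 hn1))
    · have hkE : k ∈ (mstar hFS x).val.2 := ⟨hk2, hxk⟩
      exact not_r_of_mem hu (heq.le hkE).2 (r_of_ont hFS hk1)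

theorem cjirr_eq_jpair {p : Pairs r} (h : CJIrr p) : ∃ x, p = jpair hFS x := by
  obtain ⟨p', hp'⟩ := h
  have hlt : p' < p := (hp' p').2 le_rfl
  obtain ⟨x, hx1, hx2⟩ : ∃ x, x ∈ p.val.1 ∧ x ∉ p'.val.1 := by
    by_contra hc
    push_neg at hc
    exact hlt.not_ge (pairs_le_def.2 hc)
  have h1 : jpair hFS x ≤ p := (jpair_le_iff hFS).2 hx1
  have h2 : ¬ jpair hFS x < p := fun hl => hx2 ((hp' _).1 hl (ont_refl hFS x))
  exact ⟨x, (h1.lt_or_eq.resolve_left h2).symm⟩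

theorem cmirr_eq_mpair {p : Pairs r} (h : CMIrr p) : ∃ x, p = mpair hFS x := by
  obtain ⟨p', hp'⟩ := h
  have hlt : p < p' := (hp' p').2 le_rfl
  obtain ⟨x, hx1, hx2⟩ : ∃ x, x ∈ p.val.2 ∧ x ∉ p'.val.2 := by
    by_contra hc
    push_neg at hc
    exact hlt.not_ge (pairs_le_iff_snd.2 hc)
  have h1 : p ≤ mpair hFS x := (le_mpair_iff hFS).2 hx1
  have h2 : ¬ p < mpair hFS x := fun hl => hx2 ((le_mpair_iff hFS).1 ((hp' _).1 hl))
  exact ⟨x, h1.lt_or_eq.resolve_left h2⟩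

/-- The lattice of maximal orthogonal pairs has all suprema. -/
def pairsSup (A : Set (Pairs r)) : Pairs r :=
  mkPair (perpL r (perpR r (⋃ p ∈ A, p.val.1))) (isClosed_perpL _)

omit hFS in
theorem isLUB_pairsSup (A : Set (Pairs r)) : IsLUB A (pairsSup A) := by
  constructor
  · intro p hp
    refine pairs_le_def.2 (Set.Subset.trans ?_ (subset_perpL_perpR _))
    exact Set.subset_biUnion_of_mem (u := fun q : Pairs r => q.val.1) hp
  · intro z hz
    refine pairs_le_def.2 ?_
    have h1 : (⋃ p ∈ A, p.val.1) ⊆ z.val.1 := Set.iUnion₂_subset fun p hp => hz hp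
    have h2 := perpL_anti (r := r) (perpR_anti (r := r) h1)
    rwa [fst_closed z] at h2

/-- The lattice of maximal orthogonal pairs has all infima. -/
def pairsInf (A : Set (Pairs r)) : Pairs r :=
  mkPair (⋂ p ∈ A, p.val.1) (by
    refine le_antisymm (fun z hz => ?_) (subset_perpL_perpR _)
    refine Set.mem_iInter₂.2 fun p hp => ?_
    have hsub : (⋂ q ∈ A, q.val.1) ⊆ p.val.1 := Set.biInter_subset_of_mem hp
    have h := perpL_anti (r := r) (perpR_anti (r := r) hsub) hz
    rwa [fst_closed p] at h)

omit hFS in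
theorem isGLB_pairsInf (A : Set (Pairs r)) : IsGLB A (pairsInf A) := by
  constructor
  · intro p hp
    exact pairs_le_def.2 (Set.biInter_subset_of_mem hp)
  · intro z hz
    exact pairs_le_def.2 (Set.subset_iInter₂ fun p hp => hz hp)

theorem isLUB_jirr_pairs (p : Pairs r) : IsLUB {j : Pairs r | CJIrr j ∧ j ≤ p} p := by
  constructor
  · intro q hq
    exact hq.2
  · intro z hz
    exact pairs_le_def.2 fun x hx =>
      (jpair_le_iff hFS).1 (hz ⟨cjirr_jpair hFS x, (jpair_le_iff hFS).2 hx⟩)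

theorem isGLB_mirr_pairs (p : Pairs r) : IsGLB {m : Pairs r | CMIrr m ∧ p ≤ m} p := by
  constructor
  · intro q hq
    exact hq.2
  · intro z hz
    exact pairs_le_iff_snd.2 fun y hy =>
      (le_mpair_iff hFS).1 (hz ⟨cmirr_mpair hFS y, (le_mpair_iff hFS).2 hy⟩)

theorem pairs_isKappaLattice : IsKappaLattice (Pairs r) := by
  refine ⟨fun A => ⟨pairsSup A, isLUB_pairsSup A⟩, fun A => ⟨pairsInf A, isGLB_pairsInf A⟩,
    isLUB_jirr_pairs hFS, isGLB_mirr_pairs hFS, fun j hj => ?_, fun m hm => ?_⟩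
  · obtain ⟨x, rfl⟩ := cjirr_eq_jpair hFS hj
    exact ⟨mpair hFS x, isKappa_jpair hFS x, cmirr_mpair hFS x, isKappad_mpair hFS x⟩
  · obtain ⟨x, rfl⟩ := cmirr_eq_mpair hFS hm
    exact ⟨jpair hFS x, isKappad_mpair hFS x, cjirr_jpair hFS x, isKappa_jpair hFS x⟩

theorem pairs_wellSeparated : WellSeparated (Pairs r) := by
  intro p q hn
  obtain ⟨z, hzp, hzq⟩ : ∃ z, z ∈ p.val.1 ∧ z ∉ q.val.1 := by
    by_contra hc
    push_neg at hc
    exact hn (pairs_le_def.2 hc)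
  obtain ⟨u, hu, hru⟩ : ∃ u ∈ q.val.2, r z u := by
    by_contra hc
    push_neg at hc
    apply hzq
    rw [fst_eq q]
    exact fun u hu => hc u hu
  obtain ⟨m, hm1, hm2⟩ := r_factor hFS hru
  exact ⟨jpair hFS m, mpair hFS m, cjirr_jpair hFS m, isKappa_jpair hFS m,
    (jpair_le_iff hFS).2 (fst_mem_of_ont hFS hzp hm1),
    (le_mpair_iff hFS).2 (snd_mem_of_inj hFS hu hm2)⟩

end PairsSide

end SDL
namespace SDL

section LSide

variable {L : Type*} [PartialOrder L]

noncomputable def kap (hK : IsKappaLattice L) (j : JIrrC L) : L :=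
  Classical.choose (hK.2.2.2.2.1 j.val j.prop)

theorem kap_isKappa (hK : IsKappaLattice L) (j : JIrrC L) : IsKappa (j : L) (kap hK j) :=
  (Classical.choose_spec (hK.2.2.2.2.1 j.val j.prop)).1

theorem kap_cmirr (hK : IsKappaLattice L) (j : JIrrC L) : CMIrr (kap hK j) :=
  (Classical.choose_spec (hK.2.2.2.2.1 j.val j.prop)).2.1

theorem kap_isKappad (hK : IsKappaLattice L) (j : JIrrC L) : IsKappad (kap hK j) (j : L) :=
  (Classical.choose_spec (hK.2.2.2.2.1 j.val j.prop)).2.2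

theorem kap_eq (hK : IsKappaLattice L) {j : JIrrC L} {k : L} (h : IsKappa (j : L) k) :
    kap hK j = k :=
  isKappa_unique (kap_isKappa hK j) h

theorem not_le_kap (hK : IsKappaLattice L) (j : JIrrC L) : ¬ (j : L) ≤ kap hK j := by
  obtain ⟨j', hj', hgr⟩ := kap_isKappa hK j
  intro hle
  have h2 : IsGLB {(j : L), kap hK j} (j : L) := by
    refine ⟨?_, fun z hz => hz (Set.mem_insert _ _)⟩
    rintro z (rfl | rfl)
    · exact le_rfl
    · exact hle
  have he := hgr.1.unique h2
  have hlt : j' < (j : L) := (hj' j').2 le_rfl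
  rw [he] at hlt
  exact lt_irrefl _ hlt

theorem toL_iff (hK : IsKappaLattice L) {i j : JIrrC L} : toL i j ↔ ¬ (i : L) ≤ kap hK j := by
  constructor
  · rintro ⟨k, hk, hle⟩
    rw [kap_eq hK hk]
    exact hle
  · intro h
    exact ⟨kap hK j, kap_isKappa hK j, h⟩

theorem intoL_iff (hK : IsKappaLattice L) {i j : JIrrC L} :
    intoL i j ↔ kap hK j ≤ kap hK i := by
  constructor
  · rintro ⟨ki, kj, hki, hkj, hle⟩
    rw [kap_eq hK hki, kap_eq hK hkj]
    exact hle
  · intro h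
    exact ⟨kap hK i, kap hK j, kap_isKappa hK i, kap_isKappa hK j, h⟩

theorem le_of_jirr_le (hK : IsKappaLattice L) {x z : L}
    (h : ∀ j : JIrrC L, (j : L) ≤ x → (j : L) ≤ z) : x ≤ z :=
  (hK.2.2.1 x).2 fun _ hjL => h ⟨_, hjL.1⟩ hjL.2

theorem wellsep_choose (hW : WellSeparated L) (hK : IsKappaLattice L) {z₁ z₂ : L}
    (h : ¬ z₁ ≤ z₂) : ∃ j : JIrrC L, (j : L) ≤ z₁ ∧ z₂ ≤ kap hK j := by
  obtain ⟨j, k, hj, hk, h1, h2⟩ := hW z₁ z₂ h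
  refine ⟨⟨j, hj⟩, h1, ?_⟩
  rw [kap_eq hK (j := ⟨j, hj⟩) hk]
  exact h2

theorem isTwoAcyclicFS_L (hK : IsKappaLattice L) (hW : WellSeparated L) :
    IsTwoAcyclicFS (toL (L := L)) ontoL intoL := by
  refine ⟨⟨fun j => (toL_iff hK).2 (not_le_kap hK j), fun i j => ⟨?_, ?_⟩, fun i j => ⟨?_, ?_⟩,
    fun i k => ⟨?_, ?_⟩⟩, fun i j h h' => Subtype.ext (le_antisymm h' h), fun i j h h' => ?_,
    fun i j h h' => ?_⟩
  · intro hji z ht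
    rw [toL_iff hK] at ht ⊢
    exact fun hc => ht (le_trans hji hc)
  · intro hO
    by_contra hji
    obtain ⟨j₀, h1, h2⟩ := wellsep_choose hW hK hji
    have ht : toL j j₀ := (toL_iff hK).2 fun hle => not_le_kap hK j₀ (le_trans h1 hle)
    have := hO j₀ ht
    rw [toL_iff hK] at this
    exact this h2
  · intro h z ht
    rw [intoL_iff hK] at h
    rw [toL_iff hK] at ht ⊢
    exact fun hc => ht (hc.trans h)
  · intro hI
    rw [intoL_iff hK]
    refine le_of_jirr_le hK fun j₀ hj₀ => ?_
    by_contra hc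
    have ht := hI j₀ ((toL_iff hK).2 hc)
    rw [toL_iff hK] at ht
    exact ht hj₀
  · intro h
    rw [toL_iff hK] at h
    obtain ⟨j₀, h1, h2⟩ := wellsep_choose hW hK h
    exact ⟨j₀, h1, (intoL_iff hK).2 h2⟩
  · rintro ⟨j₀, h1, h2⟩
    rw [toL_iff hK]
    rw [intoL_iff hK] at h2
    intro hik
    exact not_le_kap hK j₀ (le_trans h1 (le_trans hik h2))
  · rw [intoL_iff hK] at h h'
    have hkk : kap hK i = kap hK j := le_antisymm h' h
    have h1 := kap_isKappad hK i
    have h2 := kap_isKappad hK j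
    rw [hkk] at h1
    exact Subtype.ext (isKappad_unique h1 h2)
  · -- brick
    rw [intoL_iff hK] at h'
    by_contra hne
    have hlt : (j : L) < (i : L) := lt_of_le_of_ne h fun he => hne (Subtype.ext he.symm)
    obtain ⟨i', hi', hgr⟩ := kap_isKappa hK i
    have h1 : (j : L) ≤ i' := (hi' _).1 hlt
    have hmem : IsGLB {(i : L), i'} i' := by
      refine ⟨?_, fun z hz => hz (Set.mem_insert_of_mem _ rfl)⟩
      rintro z (rfl | rfl)
      · exact ((hi' i').2 le_rfl).le
      · exact le_rfl
    have h2 : i' ≤ kap hK i := hgr.2 hmem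
    exact not_le_kap hK j (h1.trans (h2.trans h'))

theorem perpR_phi (hK : IsKappaLattice L) (x : L) :
    perpR (toL (L := L)) {j : JIrrC L | (j : L) ≤ x} = {j : JIrrC L | x ≤ kap hK j} := by
  ext y
  simp only [perpR, Set.mem_setOf_eq]
  constructor
  · intro hy
    refine le_of_jirr_le hK fun j hj => ?_
    have h := hy j hj
    rw [toL_iff hK] at h
    exact not_not.1 h
  · intro hy j hj ht
    rw [toL_iff hK] at ht
    exact ht (hj.trans hy)

theorem perpL_phi (hK : IsKappaLattice L) (hW : WellSeparated L) (x : L) :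
    perpL (toL (L := L)) {j : JIrrC L | x ≤ kap hK j} = {j : JIrrC L | (j : L) ≤ x} := by
  ext i
  simp only [perpL, Set.mem_setOf_eq]
  constructor
  · intro hi
    by_contra hc
    obtain ⟨j₀, h1, h2⟩ := wellsep_choose hW hK hc
    have h := hi j₀ h2
    rw [toL_iff hK] at h
    exact not_le_kap hK j₀ (h1.trans (not_not.1 h))
  · intro hi y hy ht
    rw [toL_iff hK] at ht
    exact ht (hi.trans hy)

/-- The map `x ↦ ({j ≤ x}, {j | κ(j) ≥ x})`. -/
def phiL (hK : IsKappaLattice L) (hW : WellSeparated L) (x : L) : Pairs (toL (L := L)) :=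
  ⟨({j : JIrrC L | (j : L) ≤ x}, {j : JIrrC L | x ≤ kap hK j}),
    (perpR_phi hK x).symm, (perpL_phi hK hW x).symm⟩

theorem phiL_le_iff (hK : IsKappaLattice L) (hW : WellSeparated L) {x y : L} : phiL hK hW x ≤ phiL hK hW y ↔ x ≤ y := by
  constructor
  · intro h
    exact le_of_jirr_le hK fun j hj => h hj
  · intro h
    exact pairs_le_def.2 fun j hj => le_trans hj h

theorem phiL_eq_of_isLUB (hK : IsKappaLattice L) (hW : WellSeparated L) (p : Pairs (toL (L := L))) (x : L)
    (hx : IsLUB (Subtype.val '' p.val.1) x) : phiL hK hW x = p := by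
  apply pairs_ext
  ext j
  show (j : L) ≤ x ↔ j ∈ p.val.1
  constructor
  · intro hj
    by_contra hc
    have hj' : j ∉ perpL (toL (L := L)) p.val.2 := by
      rw [← fst_eq p]
      exact hc
    simp only [perpL, Set.mem_setOf_eq, not_forall, not_not] at hj'
    obtain ⟨y, hy, ht⟩ := hj'
    rw [toL_iff hK] at ht
    apply ht
    refine hj.trans (hx.2 fun a ha => ?_)
    obtain ⟨i, hi, rfl⟩ := ha
    have hni : ¬ toL i y := by
      rw [snd_eq p] at hy
      exact hy i hi
    rw [toL_iff hK] at hni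
    exact not_not.1 hni
  · intro hj
    exact hx.1 ⟨j, hj, rfl⟩

noncomputable def psiL (hK : IsKappaLattice L) (p : Pairs (toL (L := L))) : L :=
  Classical.choose (hK.1 (Subtype.val '' p.val.1))

theorem psiL_isLUB (hK : IsKappaLattice L) (p : Pairs (toL (L := L))) :
    IsLUB (Subtype.val '' p.val.1) (psiL hK p) :=
  Classical.choose_spec (hK.1 (Subtype.val '' p.val.1))

theorem phiL_psiL (hK : IsKappaLattice L) (hW : WellSeparated L) (p : Pairs (toL (L := L))) : phiL hK hW (psiL hK p) = p :=
  phiL_eq_of_isLUB hK hW p _ (psiL_isLUB hK p)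

theorem isLUB_vals_phiL (hK : IsKappaLattice L) (x : L) : IsLUB (Subtype.val '' {j : JIrrC L | (j : L) ≤ x}) x := by
  constructor
  · rintro a ⟨j, hj, rfl⟩
    exact hj
  · intro z hz
    exact le_of_jirr_le hK fun j hj => hz ⟨j, hj, rfl⟩

theorem psiL_phiL (hK : IsKappaLattice L) (hW : WellSeparated L) (x : L) : psiL hK (phiL hK hW x) = x :=
  (psiL_isLUB hK _).unique (isLUB_vals_phiL hK x)

/-- The explicit order isomorphism `L ≃o Pairs (toL)`. -/
noncomputable def eL (hK : IsKappaLattice L) (hW : WellSeparated L) : L ≃o Pairs (toL (L := L)) where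
  toFun := phiL hK hW
  invFun := psiL hK
  left_inv := psiL_phiL hK hW
  right_inv := phiL_psiL hK hW
  map_rel_iff' := @fun x y => phiL_le_iff hK hW

theorem phiL_snd_eq (hK : IsKappaLattice L) (x : L) :
    {j : JIrrC L | x ≤ kap hK j} =
      {j : JIrrC L | ∃ m : L, CMIrr m ∧ x ≤ m ∧ IsKappad m (j : L)} := by
  ext j
  simp only [Set.mem_setOf_eq]
  constructor
  · intro h
    exact ⟨kap hK j, kap_cmirr hK j, h, kap_isKappad hK j⟩
  · rintro ⟨m, hm, hxm, hmj⟩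
    obtain ⟨k, hk1, hk2, hk3⟩ := hK.2.2.2.2.2 m hm
    have hkj : k = (j : L) := isKappad_unique hk1 hmj
    subst hkj
    rw [kap_eq hK (j := j) hk3]
    exact hxm

theorem psiL_isGLB (hK : IsKappaLattice L) (hW : WellSeparated L) (p : Pairs (toL (L := L))) :
    IsGLB {k : L | ∃ j ∈ p.val.2, IsKappa (j : L) k} (psiL hK p) := by
  have hp : phiL hK hW (psiL hK p) = p := phiL_psiL hK hW p
  constructor
  · rintro k ⟨j, hj, hk⟩
    rw [← hp] at hj
    rw [← kap_eq hK hk]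
    exact hj
  · intro z hz
    by_contra hc
    obtain ⟨j₀, h1, h2⟩ := wellsep_choose hW hK hc
    have hj₀ : j₀ ∈ p.val.2 := by
      rw [← hp]
      exact h2
    have hzk : z ≤ kap hK j₀ := hz ⟨j₀, hj₀, kap_isKappa hK j₀⟩
    exact not_le_kap hK j₀ (h1.trans hzk)

end LSide

section PartA

variable {L : Type*} [PartialOrder L] {S : Type*} {r ont inj : S → S → Prop}

theorem part_a (hK : IsKappaLattice L) (hFS : IsTwoAcyclicFS r ont inj) (f : L ≃o Pairs r) :
    ∃ e : S ≃ JIrrC L, ∀ x y : S,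
      (r x y ↔ toL (e x) (e y)) ∧
      (ont x y ↔ ontoL (e x) (e y)) ∧
      (inj x y ↔ intoL (e x) (e y)) := by
  have hcj : ∀ x : S, CJIrr ((f.symm (jpair hFS x) : L)) := fun x =>
    cjirr_map (f.symm : Pairs r ≃o L) (cjirr_jpair hFS x)
  set g : S → JIrrC L := fun x => ⟨f.symm (jpair hFS x), hcj x⟩ with hg
  have hginj : Function.Injective g := by
    intro x y hxy
    have h1 : f.symm (jpair hFS x) = f.symm (jpair hFS y) := congrArg Subtype.val hxy
    exact jpair_injective hFS (f.symm.injective h1)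
  have hgsurj : Function.Surjective g := by
    rintro ⟨j, hj⟩
    obtain ⟨x, hx⟩ := cjirr_eq_jpair hFS (cjirr_map f hj)
    refine ⟨x, Subtype.ext ?_⟩
    show (f.symm (jpair hFS x) : L) = j
    rw [← hx, f.symm_apply_apply]
  have hkapg : ∀ x : S, kap hK (g x) = f.symm (mpair hFS x) := fun x =>
    kap_eq hK (j := g x) (isKappa_map (f.symm : Pairs r ≃o L) (isKappa_jpair hFS x))
  refine ⟨Equiv.ofBijective g ⟨hginj, hgsurj⟩, fun x y => ⟨?_, ?_, ?_⟩⟩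
  · show r x y ↔ toL (g x) (g y)
    rw [toL_iff hK, hkapg y]
    show r x y ↔ ¬ (f.symm (jpair hFS x) ≤ f.symm (mpair hFS y))
    rw [f.symm.le_iff_le, jpair_le_mpair_iff hFS, not_not]
  · show ont x y ↔ ontoL (g x) (g y)
    show ont x y ↔ (f.symm (jpair hFS y) : L) ≤ (f.symm (jpair hFS x) : L)
    rw [f.symm.le_iff_le]
    constructor
    · intro h
      exact (jpair_le_iff hFS).2 h
    · intro h
      exact (jpair_le_iff hFS).1 h
  · show inj x y ↔ intoL (g x) (g y)
    rw [intoL_iff hK, hkapg x, hkapg y, f.symm.le_iff_le]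
    constructor
    · intro h
      exact (le_mpair_iff hFS).2 h
    · intro h
      exact (le_mpair_iff hFS).1 h

end PartA

end SDL

namespace SDL

/-- Theorem 1.4/1.5 (infinite FTFSDL): a poset `L` is a well separated κ-lattice if and only
if it is isomorphic to `Pairs(→)` for a two-acyclic factorization system `(Ш, →, ↠, ↪)`.
If so, the system is isomorphic to `(JIrr^c(L), →_L, ↠_L, ↪_L)`, and
`x ↦ ({j ∈ JIrr^c : j ≤ x}, κᵈ({m ∈ MIrr^c : m ≥ x}))` is an isomorphism from `L` to
`Pairs(→_L)` with inverse `(X,Y) ↦ ⋁X = ⋀κ(Y)`. -/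
theorem wellsep_kappa_iff_pairs (L : Type u) [PartialOrder L] :
    ((IsKappaLattice L ∧ WellSeparated L) ↔
      ∃ (S : Type u) (r ont inj : S → S → Prop),
        IsTwoAcyclicFS r ont inj ∧ Nonempty (L ≃o Pairs r)) ∧
    (IsKappaLattice L → WellSeparated L →
      (∀ (S : Type u) (r ont inj : S → S → Prop), IsTwoAcyclicFS r ont inj →
        (L ≃o Pairs r) →
        ∃ e : S ≃ JIrrC L, ∀ x y : S,
          (r x y ↔ toL (e x) (e y)) ∧
          (ont x y ↔ ontoL (e x) (e y)) ∧
          (inj x y ↔ intoL (e x) (e y))) ∧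
      (∃ e : L ≃o Pairs (toL (L := L)),
        (∀ x : L,
          (e x).val.1 = {j : JIrrC L | (j : L) ≤ x} ∧
          (e x).val.2 = {j : JIrrC L | ∃ m : L, CMIrr m ∧ x ≤ m ∧ IsKappad m (j : L)}) ∧
        (∀ p : Pairs (toL (L := L)),
          IsLUB (Subtype.val '' p.val.1) (e.symm p) ∧
          IsGLB {k : L | ∃ j ∈ p.val.2, IsKappa (j : L) k} (e.symm p)))) := by
  constructor
  · constructor
    · rintro ⟨hK, hW⟩
      exact ⟨JIrrC L, toL, ontoL, intoL, isTwoAcyclicFS_L hK hW, ⟨eL hK hW⟩⟩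
    · rintro ⟨S, r, ont, inj, hFS, ⟨f⟩⟩
      exact ⟨isKappaLattice_map f (pairs_isKappaLattice hFS),
        wellSeparated_map f (pairs_wellSeparated hFS)⟩
  · intro hK hW
    refine ⟨fun S r ont inj hFS f => part_a hK hFS f,
      ⟨eL hK hW, fun x => ⟨rfl, ?_⟩, fun p => ⟨?_, ?_⟩⟩⟩
    · exact phiL_snd_eq hK x
    · exact psiL_isLUB hK p
    · exact psiL_isGLB hK hW p

end SDL
end

section
/- If L is a κ-lattice, then the map x ↦ ({j ∈ JIrr^c(L) : j ≤ x}, κᵈ({m ∈ MIrr^c(L) : m ≥ x})) is an order isomorphism from L to Pairs(→_L), with inverse (X,Y) ↦ ⋁X = ⋀(κ(Y)). Moreover, the system (JIrr^c(L), →_L, ↠_L, ↪_L) satisfies: Fact(→_L) = (↠_L, ↪_L), Mult(↠_L, ↪_L) ⊆ →_L, the relations ↠_L and ↪_L are partial orders, and the brick condition holds (i ↠_L j ↪_L i implies i = j); that is, it has all properties of a two-acyclic factorization system except that possibly Mult(↠_L, ↪_L) is strictly contained in →_L. -/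
namespace SDL

section Aux

variable {L : Type*} [PartialOrder L]

lemma isKappa_unique_s4 {j k1 k2 : L} (h1 : IsKappa j k1) (h2 : IsKappa j k2) : k1 = k2 := by
  obtain ⟨j1, hj1, hg1⟩ := h1
  obtain ⟨j2, hj2, hg2⟩ := h2
  have hj : j1 = j2 :=
    le_antisymm ((hj2 j1).mp ((hj1 j1).mpr le_rfl)) ((hj1 j2).mp ((hj2 j2).mpr le_rfl))
  subst hj
  exact le_antisymm (hg2.2 hg1.1) (hg1.2 hg2.1)

lemma isKappad_unique_s4 {m k1 k2 : L} (h1 : IsKappad m k1) (h2 : IsKappad m k2) : k1 = k2 := by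
  obtain ⟨m1, hm1, hg1⟩ := h1
  obtain ⟨m2, hm2, hg2⟩ := h2
  have hm : m1 = m2 :=
    le_antisymm ((hm1 m2).mp ((hm2 m2).mpr le_rfl)) ((hm2 m1).mp ((hm1 m1).mpr le_rfl))
  subst hm
  exact le_antisymm (hg1.2 hg2.1) (hg2.2 hg1.1)

lemma not_le_of_isKappa {j k : L} (h : IsKappa j k) : ¬ j ≤ k := by
  obtain ⟨j', hj', hg⟩ := h
  intro hle
  have hjl : j ∈ lowerBounds ({j, k} : Set L) := by
    intro a ha
    simp only [Set.mem_insert_iff, Set.mem_singleton_iff] at ha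
    rcases ha with rfl | rfl
    · exact le_rfl
    · exact hle
  have h1 : j ≤ j' := hg.1.2 hjl
  have h2 : j' < j := (hj' j').mpr le_rfl
  exact absurd (lt_of_le_of_lt h1 h2) (lt_irrefl j)

lemma le_kappa_of_lt {j k x : L} (h : IsKappa j k) (hx : x < j) : x ≤ k := by
  obtain ⟨j', hj', hg⟩ := h
  have h1 : x ≤ j' := (hj' x).mp hx
  have h2 : j' ≤ k := hg.1.1 (by simp)
  exact h1.trans h2

end Aux

/-- Theorem 1.5: if `L` is a κ-lattice, then
`x ↦ ({j ∈ JIrr^c : j ≤ x}, κᵈ({m ∈ MIrr^c : m ≥ x}))` is an isomorphism from `L` to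
`Pairs(→_L)`, with inverse `(X,Y) ↦ ⋁X = ⋀κ(Y)`; moreover the system
`(JIrr^c(L), →_L, ↠_L, ↪_L)` has all the properties of a two-acyclic factorization system
except that possibly `Mult(↠_L, ↪_L) ⊊ →_L`. -/
theorem kappa_lattice_iso_pairs (L : Type u) [PartialOrder L] (h : IsKappaLattice L) :
    (∃ e : L ≃o Pairs (toL (L := L)),
      (∀ x : L,
        (e x).val.1 = {j : JIrrC L | (j : L) ≤ x} ∧
        (e x).val.2 = {j : JIrrC L | ∃ m : L, CMIrr m ∧ x ≤ m ∧ IsKappad m (j : L)}) ∧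
      (∀ p : Pairs (toL (L := L)),
        IsLUB (Subtype.val '' p.val.1) (e.symm p) ∧
        IsGLB {k : L | ∃ j ∈ p.val.2, IsKappa (j : L) k} (e.symm p))) ∧
    (∀ i j : JIrrC L, ontoL i j ↔ Onto (toL (L := L)) i j) ∧
    (∀ i j : JIrrC L, intoL i j ↔ Into (toL (L := L)) i j) ∧
    (∀ i j : JIrrC L, Mult (ontoL (L := L)) (intoL (L := L)) i j → toL i j) ∧
    (∀ i : JIrrC L, ontoL i i) ∧
    (∀ i j k : JIrrC L, ontoL i j → ontoL j k → ontoL i k) ∧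
    (∀ i j : JIrrC L, ontoL i j → ontoL j i → i = j) ∧
    (∀ i : JIrrC L, intoL i i) ∧
    (∀ i j k : JIrrC L, intoL i j → intoL j k → intoL i k) ∧
    (∀ i j : JIrrC L, intoL i j → intoL j i → i = j) ∧
    (∀ i j : JIrrC L, ontoL i j → intoL j i → i = j) := by
  classical
  obtain ⟨h1, h2, h3, h4, h5, h6⟩ := h
  -- κ as a function on join-irreducibles
  let kap : JIrrC L → L := fun j => Classical.choose (h5 j.1 j.2)
  have hkapspec : ∀ j : JIrrC L,
      IsKappa (j : L) (kap j) ∧ CMIrr (kap j) ∧ IsKappad (kap j) (j : L) :=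
    fun j => Classical.choose_spec (h5 j.1 j.2)
  have hkap : ∀ j : JIrrC L, IsKappa (j : L) (kap j) := fun j => (hkapspec j).1
  have hkapM : ∀ j : JIrrC L, CMIrr (kap j) := fun j => (hkapspec j).2.1
  have hkapd : ∀ j : JIrrC L, IsKappad (kap j) (j : L) := fun j => (hkapspec j).2.2
  -- every CMIrr element is `kap` of some join-irreducible
  have hmirr : ∀ m : L, CMIrr m → ∃ j : JIrrC L, kap j = m ∧ IsKappad m (j : L) := by
    intro m hm
    obtain ⟨k, hdk, hcjk, hkm⟩ := h6 m hm
    refine ⟨⟨k, hcjk⟩, isKappa_unique_s4 (hkap ⟨k, hcjk⟩) hkm, hdk⟩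
  have toL_iff : ∀ i j : JIrrC L, toL i j ↔ ¬ (i : L) ≤ kap j := by
    intro i j
    constructor
    · rintro ⟨k, hk, hle⟩
      rwa [isKappa_unique_s4 (hkap j) hk]
    · intro hle
      exact ⟨kap j, hkap j, hle⟩
  have intoL_iff : ∀ i j : JIrrC L, intoL i j ↔ kap j ≤ kap i := by
    intro i j
    constructor
    · rintro ⟨ki, kj, hki, hkj, hle⟩
      rwa [isKappa_unique_s4 (hkap i) hki, isKappa_unique_s4 (hkap j) hkj]
    · intro hle
      exact ⟨kap i, kap j, hkap i, hkap j, hle⟩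
  -- the Y-set of x coincides with {j | x ≤ kap j}
  have Yeq : ∀ x : L,
      {j : JIrrC L | ∃ m : L, CMIrr m ∧ x ≤ m ∧ IsKappad m (j : L)}
        = {j : JIrrC L | x ≤ kap j} := by
    intro x
    ext j
    constructor
    · rintro ⟨m, hm, hxm, hmd⟩
      obtain ⟨j', hj', hj'd⟩ := hmirr m hm
      have : j' = j := Subtype.ext (isKappad_unique_s4 hj'd hmd)
      subst this
      show x ≤ kap j'
      rw [hj']
      exact hxm
    · intro hx
      exact ⟨kap j, hkapM j, hx, hkapd j⟩
  -- perpR of the downset of x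
  have hperpR : ∀ x : L,
      perpR (toL (L := L)) {j : JIrrC L | (j : L) ≤ x} = {j : JIrrC L | x ≤ kap j} := by
    intro x
    ext j
    simp only [perpR, Set.mem_setOf_eq]
    constructor
    · intro hall
      refine (h3 x).2 ?_
      rintro a ⟨hcj, hax⟩
      have := hall ⟨a, hcj⟩ hax
      rw [toL_iff] at this
      exact not_not.mp this
    · intro hx i hix
      rw [toL_iff]
      exact not_not_intro (le_trans hix hx)
  -- perpL of {j | x ≤ kap j}
  have hperpL : ∀ x : L,
      perpL (toL (L := L)) {j : JIrrC L | x ≤ kap j} = {j : JIrrC L | (j : L) ≤ x} := by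
    intro x
    ext i
    simp only [perpL, Set.mem_setOf_eq]
    constructor
    · intro hall
      refine (h4 x).2 ?_
      rintro m ⟨hm, hxm⟩
      obtain ⟨j', hj', _⟩ := hmirr m hm
      have hx' : x ≤ kap j' := by rw [hj']; exact hxm
      have := hall j' hx'
      rw [toL_iff] at this
      rw [← hj']
      exact not_not.mp this
    · intro hix j hxj
      rw [toL_iff]
      exact not_not_intro (le_trans hix hxj)
  -- maximal orthogonal pairs from elements of L
  have mopx : ∀ x : L, IsMOP (toL (L := L)) {j : JIrrC L | (j : L) ≤ x}
      {j : JIrrC L | ∃ m : L, CMIrr m ∧ x ≤ m ∧ IsKappad m (j : L)} := by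
    intro x
    rw [Yeq x]
    exact ⟨(hperpR x).symm, (hperpL x).symm⟩
  let toFun : L → Pairs (toL (L := L)) := fun x =>
    ⟨({j : JIrrC L | (j : L) ≤ x}, {j : JIrrC L | ∃ m : L, CMIrr m ∧ x ≤ m ∧ IsKappad m (j : L)}),
      mopx x⟩
  let sup : Pairs (toL (L := L)) → L := fun p =>
    Classical.choose (h1 (Subtype.val '' p.val.1))
  have hsup : ∀ p : Pairs (toL (L := L)), IsLUB (Subtype.val '' p.val.1) (sup p) :=
    fun p => Classical.choose_spec (h1 (Subtype.val '' p.val.1))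
  have himage : ∀ x : L,
      Subtype.val '' {j : JIrrC L | (j : L) ≤ x} = {j : L | CJIrr j ∧ j ≤ x} := by
    intro x
    ext a
    simp only [Set.mem_image, Set.mem_setOf_eq]
    constructor
    · rintro ⟨⟨b, hb⟩, hbx, rfl⟩
      exact ⟨hb, hbx⟩
    · rintro ⟨hcj, hax⟩
      exact ⟨⟨a, hcj⟩, hax, rfl⟩
  have left_inv : ∀ x : L, sup (toFun x) = x := by
    intro x
    have := hsup (toFun x)
    rw [show (toFun x).val.1 = {j : JIrrC L | (j : L) ≤ x} from rfl, himage x] at this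
    exact this.unique (h3 x)
  have first_comp : ∀ p : Pairs (toL (L := L)),
      {j : JIrrC L | (j : L) ≤ sup p} = p.val.1 := by
    intro p
    ext j
    simp only [Set.mem_setOf_eq]
    constructor
    · intro hj
      rw [p.prop.2]
      show ∀ y ∈ p.val.2, ¬ toL j y
      intro y hy
      rw [toL_iff]
      refine not_not_intro (le_trans hj ?_)
      refine (hsup p).2 ?_
      rintro a ⟨b, hbX, rfl⟩
      have hy' : y ∈ perpR (toL (L := L)) p.val.1 := by rw [← p.prop.1]; exact hy
      have := hy' b hbX
      rw [toL_iff] at this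
      exact not_not.mp this
    · intro hj
      exact (hsup p).1 ⟨j, hj, rfl⟩
  have right_inv : ∀ p : Pairs (toL (L := L)), toFun (sup p) = p := by
    intro p
    apply Subtype.ext
    apply Prod.ext
    · exact first_comp p
    · show {j : JIrrC L | ∃ m : L, CMIrr m ∧ sup p ≤ m ∧ IsKappad m (j : L)} = p.val.2
      rw [p.prop.1, (mopx (sup p)).1, first_comp p]
  let e : L ≃o Pairs (toL (L := L)) :=
    { toFun := toFun
      invFun := sup
      left_inv := left_inv
      right_inv := right_inv
      map_rel_iff' := by
        intro x y
        show (toFun x).val.1 ⊆ (toFun y).val.1 ↔ x ≤ y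
        constructor
        · intro hsub
          refine (h3 x).2 ?_
          rintro a ⟨hcj, hax⟩
          exact hsub (show (⟨a, hcj⟩ : JIrrC L) ∈ _ from hax)
        · intro hxy j hj
          exact le_trans hj hxy }
  refine ⟨⟨e, ?_, ?_⟩, ?_, ?_, ?_, ?_, ?_, ?_, ?_, ?_, ?_, ?_⟩
  · intro x
    exact ⟨rfl, rfl⟩
  · intro p
    constructor
    · exact hsup p
    · have hx : e.symm p = sup p := rfl
      rw [hx]
      have hset : {k : L | ∃ j ∈ p.val.2, IsKappa (j : L) k}
          = {m : L | CMIrr m ∧ sup p ≤ m} := by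
        have hp2 : p.val.2
            = {j : JIrrC L | ∃ m : L, CMIrr m ∧ sup p ≤ m ∧ IsKappad m (j : L)} := by
          conv_lhs => rw [← right_inv p]
        ext k
        simp only [Set.mem_setOf_eq, hp2, Yeq (sup p)]
        constructor
        · rintro ⟨j, hj, hk⟩
          rw [isKappa_unique_s4 hk (hkap j)]
          exact ⟨hkapM j, hj⟩
        · rintro ⟨hm, hxm⟩
          obtain ⟨j', hj', _⟩ := hmirr k hm
          refine ⟨j', by rw [hj']; exact hxm, ?_⟩
          have := hkap j'
          rwa [hj'] at this
      rw [hset]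
      exact h4 (sup p)
  · -- onto_iff
    intro i j
    constructor
    · intro hle z hjz
      rw [toL_iff] at hjz ⊢
      intro hik
      exact hjz (le_trans hle hik)
    · intro hOnto
      refine (h4 (i : L)).2 ?_
      rintro m ⟨hm, him⟩
      obtain ⟨j', hj', _⟩ := hmirr m hm
      have h1' : ¬ toL i j' := by
        rw [toL_iff, hj']
        exact not_not_intro him
      have h2' : ¬ toL j j' := fun hc => h1' (hOnto j' hc)
      rw [toL_iff, hj'] at h2'
      exact not_not.mp h2'
  · -- into_iff
    intro i j
    rw [intoL_iff]
    constructor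
    · intro hle z hzi
      rw [toL_iff] at hzi ⊢
      intro hzj
      exact hzi (le_trans hzj hle)
    · intro hInto
      refine (h3 (kap j)).2 ?_
      rintro a ⟨hcj, haj⟩
      have h1' : ¬ toL (⟨a, hcj⟩ : JIrrC L) j := by
        rw [toL_iff]; exact not_not_intro haj
      have h2' : ¬ toL (⟨a, hcj⟩ : JIrrC L) i := fun hc => h1' (hInto _ hc)
      rw [toL_iff] at h2'
      exact not_not.mp h2'
  · -- Mult ⊆ toL
    rintro i j ⟨y, hon, hin⟩
    rw [intoL_iff] at hin
    rw [toL_iff]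
    intro hik
    exact not_le_of_isKappa (hkap y) (le_trans hon (le_trans hik hin))
  · exact fun i => le_rfl
  · exact fun i j k hij hjk => le_trans hjk hij
  · exact fun i j hij hji => Subtype.ext (le_antisymm hji hij)
  · intro i
    rw [intoL_iff]
  · intro i j k hij hjk
    rw [intoL_iff] at *
    exact le_trans hjk hij
  · intro i j hij hji
    rw [intoL_iff] at *
    exact Subtype.ext (isKappad_unique_s4 ((le_antisymm hji hij) ▸ hkapd j) (hkapd i)) |>.symm
  · -- brick
    intro i j hon hin
    rw [intoL_iff] at hin
    by_cases heq : (j : L) = (i : L)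
    · exact Subtype.ext heq.symm
    · exfalso
      have hlt : (j : L) < (i : L) := lt_of_le_of_ne hon heq
      have hjk : (j : L) ≤ kap i := le_kappa_of_lt (hkap i) hlt
      exact not_le_of_isKappa (hkap j) (le_trans hjk hin)

end SDL
end

section
/- Suppose → is a reflexive relation, and ↠ and ↪ are reflexive and transitive relations, on a set Ш. Then: (1) if (↠₁,↪₁) ⊆ (↠₂,↪₂) componentwise for pairs of reflexive transitive relations, then Mult(↠₁,↪₁) ⊆ Mult(↠₂,↪₂); (2) ↠ ∪ ↪ ⊆ Mult(↠,↪); (3) Mult(Fact(→)) ⊆ →; (4) Fact(Mult(↠,↪)) ⊇ (↠,↪) componentwise; (5) Mult(Fact(Mult(↠,↪))) = Mult(↠,↪). -/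
namespace SDL

/-- Proposition 2.1: basic facts about the operations `Fact` and `Mult`. -/
theorem mult_fact_facts (S : Type u) (r ont inj : S → S → Prop)
    (hr : ∀ x, r x x)
    (hontr : Reflexive ont) (hontt : Transitive ont)
    (hinjr : Reflexive inj) (hinjt : Transitive inj) :
    (∀ ont₁ inj₁ ont₂ inj₂ : S → S → Prop,
      Reflexive ont₁ → Transitive ont₁ → Reflexive inj₁ → Transitive inj₁ →
      Reflexive ont₂ → Transitive ont₂ → Reflexive inj₂ → Transitive inj₂ →
      (∀ x y, ont₁ x y → ont₂ x y) → (∀ x y, inj₁ x y → inj₂ x y) →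
      ∀ x y, Mult ont₁ inj₁ x y → Mult ont₂ inj₂ x y) ∧
    (∀ x y, ont x y ∨ inj x y → Mult ont inj x y) ∧
    (∀ x y, Mult (Onto r) (Into r) x y → r x y) ∧
    ((∀ x y, ont x y → Onto (Mult ont inj) x y) ∧
     (∀ x y, inj x y → Into (Mult ont inj) x y)) ∧
    (∀ x y, Mult (Onto (Mult ont inj)) (Into (Mult ont inj)) x y ↔ Mult ont inj x y) := by
  refine ⟨?_, ?_, ?_, ?_, ?_⟩
  · rintro o1 i1 o2 i2 _ _ _ _ _ _ _ _ ho hi x y ⟨w, h1, h2⟩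
    exact ⟨w, ho _ _ h1, hi _ _ h2⟩
  · rintro x y (h | h)
    · exact ⟨y, h, hinjr y⟩
    · exact ⟨x, hontr x, h⟩
  · rintro x y ⟨w, ho, hi⟩
    exact ho y (hi w (hr w))
  · constructor
    · rintro x y h z ⟨w, h1, h2⟩
      exact ⟨w, hontt h h1, h2⟩
    · rintro x y h z ⟨w, h1, h2⟩
      exact ⟨w, h1, hinjt h2 h⟩
  · intro x y
    constructor
    · rintro ⟨w, ho, hi⟩
      exact hi x (ho w ⟨w, hontr w, hinjr w⟩)
    · rintro ⟨w, h1, h2⟩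
      refine ⟨w, ?_, ?_⟩
      · rintro z ⟨v, g1, g2⟩; exact ⟨v, hontt h1 g1, g2⟩
      · rintro z ⟨v, g1, g2⟩; exact ⟨v, g1, hinjt g2 h2⟩

end SDL
end

section
/- Let (Ш, →, ↠, ↪) be a two-acyclic factorization system. If x → y ↪ x or x ↠ y → x, then x = y. -/
namespace SDL

/-- Proposition 2.4: in a two-acyclic factorization system, if `x → y ↪ x` or `x ↠ y → x`,
then `x = y`. -/
theorem acyclic_stronger (S : Type u) (r ont inj : S → S → Prop)
    (h : IsTwoAcyclicFS r ont inj) (x y : S)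
    (hxy : (r x y ∧ inj y x) ∨ (ont x y ∧ r y x)) : x = y := by
  rcases hxy with ⟨hr, hi⟩ | ⟨ho, hr⟩
  · obtain ⟨w, hw1, hw2⟩ := (h.mult_iff x y).1 hr
    have hwx : inj w x := by
      rw [h.into_iff] at hw2 hi ⊢
      exact fun z hz => hi z (hw2 z hz)
    have hxw := h.brick x w hw1 hwx
    subst hxw
    exact h.into_antisymm x y hw2 hi
  · obtain ⟨w, hw1, hw2⟩ := (h.mult_iff y x).1 hr
    have hxw : ont x w := by
      rw [h.onto_iff] at hw1 ho ⊢
      exact fun z hz => ho z (hw1 z hz)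
    have hxw' := h.brick x w hxw hw2
    subst hxw'
    exact h.onto_antisymm x y ho hw1

end SDL
end

section
/- Given two partial orders ↪ and ↠ on a set Ш, the tuple (Ш, Mult(↠,↪), ↠, ↪) is a two-acyclic factorization system if and only if the following hold: (i) there do not exist distinct x,y in Ш with x ↪ y and y ↠ x; (ii) for all x,y ∈ Ш, x ↠ y iff down_↪ down_↠ {y} ⊆ down_↪ down_↠ {x}; (iii) for all x,y ∈ Ш, x ↪ y iff up_↠ up_↪ {x} ⊆ up_↠ up_↪ {y}. If these conditions hold, then for any X ⊆ Ш, X^⊥ = Ш \ down_↪(down_↠ X) and ^⊥X = Ш \ up_↠(up_↪ X). -/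
namespace SDL

/-- Proposition 2.6: characterization of two-acyclic factorization systems in terms of the
two partial orders `↠` and `↪` alone, together with the resulting description of the
orthogonality operators. -/
theorem two_acyclic_from_posets (S : Type u) (ont inj : S → S → Prop)
    (hontr : Reflexive ont) (hontt : Transitive ont)
    (honta : ∀ x y, ont x y → ont y x → x = y)
    (hinjr : Reflexive inj) (hinjt : Transitive inj)
    (hinja : ∀ x y, inj x y → inj y x → x = y) :
    (IsTwoAcyclicFS (Mult ont inj) ont inj ↔
      ((∀ x y, inj x y → ont y x → x = y) ∧
       (∀ x y, ont x y ↔ dnRel inj (dnRel ont {y}) ⊆ dnRel inj (dnRel ont {x})) ∧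
       (∀ x y, inj x y ↔ upRel ont (upRel inj {x}) ⊆ upRel ont (upRel inj {y})))) ∧
    (((∀ x y, inj x y → ont y x → x = y) ∧
      (∀ x y, ont x y ↔ dnRel inj (dnRel ont {y}) ⊆ dnRel inj (dnRel ont {x})) ∧
      (∀ x y, inj x y ↔ upRel ont (upRel inj {x}) ⊆ upRel ont (upRel inj {y}))) →
      ∀ X : Set S,
        perpR (Mult ont inj) X = (dnRel inj (dnRel ont X))ᶜ ∧
        perpL (Mult ont inj) X = (upRel ont (upRel inj X))ᶜ) := by
  constructor
  · constructor
    · intro h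
      refine ⟨fun x y hi ho => (h.brick y x ho hi).symm, ?_, ?_⟩
      · intro x y
        rw [h.onto_iff x y]
        constructor
        · intro ho z hz
          simp only [dnRel, Set.mem_setOf_eq, Set.mem_singleton_iff] at hz ⊢
          obtain ⟨w, ⟨v, hv, hvw⟩, hwz⟩ := hz
          subst hv
          obtain ⟨u, hu1, hu2⟩ := ho z ⟨w, hvw, hwz⟩
          exact ⟨u, ⟨x, rfl, hu1⟩, hu2⟩
        · intro hsub z hyz
          obtain ⟨w, hw1, hw2⟩ := hyz
          have : z ∈ dnRel inj (dnRel ont {x}) :=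
            hsub ⟨w, ⟨y, rfl, hw1⟩, hw2⟩
          obtain ⟨u, ⟨v, hv, hvu⟩, huz⟩ := this
          subst hv
          exact ⟨u, hvu, huz⟩
      · intro x y
        rw [h.into_iff x y]
        constructor
        · intro hi z hz
          simp only [upRel, Set.mem_setOf_eq, Set.mem_singleton_iff] at hz ⊢
          obtain ⟨w, ⟨v, hv, hvw⟩, hwz⟩ := hz
          subst hv
          obtain ⟨u, hu1, hu2⟩ := hi z ⟨w, hwz, hvw⟩
          exact ⟨u, ⟨y, rfl, hu2⟩, hu1⟩
        · intro hsub z hzx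
          obtain ⟨w, hw1, hw2⟩ := hzx
          have : z ∈ upRel ont (upRel inj {y}) :=
            hsub ⟨w, ⟨x, rfl, hw2⟩, hw1⟩
          obtain ⟨u, ⟨v, hv, hvu⟩, huz⟩ := this
          subst hv
          exact ⟨u, huz, hvu⟩
    · rintro ⟨hb, ho, hi⟩
      refine ⟨⟨fun x => ⟨x, hontr x, hinjr x⟩, ?_, ?_, fun x z => Iff.rfl⟩,
        honta, hinja, fun x y ho hi => (hb y x hi ho).symm⟩
      · intro x y
        rw [ho x y]
        constructor
        · intro hsub z hyz
          obtain ⟨w, hw1, hw2⟩ := hyz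
          have : z ∈ dnRel inj (dnRel ont {x}) :=
            hsub ⟨w, ⟨y, rfl, hw1⟩, hw2⟩
          obtain ⟨u, ⟨v, hv, hvu⟩, huz⟩ := this
          subst hv
          exact ⟨u, hvu, huz⟩
        · intro hO z hz
          obtain ⟨w, ⟨v, hv, hvw⟩, hwz⟩ := hz
          subst hv
          obtain ⟨u, hu1, hu2⟩ := hO z ⟨w, hvw, hwz⟩
          exact ⟨u, ⟨x, rfl, hu1⟩, hu2⟩
      · intro x y
        rw [hi x y]
        constructor
        · intro hsub z hzx
          obtain ⟨w, hw1, hw2⟩ := hzx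
          have : z ∈ upRel ont (upRel inj {y}) :=
            hsub ⟨w, ⟨x, rfl, hw2⟩, hw1⟩
          obtain ⟨u, ⟨v, hv, hvu⟩, huz⟩ := this
          subst hv
          exact ⟨u, huz, hvu⟩
        · intro hI z hz
          obtain ⟨w, ⟨v, hv, hvw⟩, hwz⟩ := hz
          subst hv
          obtain ⟨u, hu1, hu2⟩ := hI z ⟨w, hwz, hvw⟩
          exact ⟨u, ⟨y, rfl, hu2⟩, hu1⟩
  · intro _ X
    constructor
    · ext z
      simp only [perpR, Set.mem_setOf_eq, Set.mem_compl_iff, dnRel, Mult]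
      constructor
      · rintro h ⟨w, ⟨x, hx, hxw⟩, hwz⟩
        exact h x hx ⟨w, hxw, hwz⟩
      · rintro h x hx ⟨w, hxw, hwz⟩
        exact h ⟨w, ⟨x, hx, hxw⟩, hwz⟩
    · ext z
      simp only [perpL, Set.mem_setOf_eq, Set.mem_compl_iff, upRel, Mult]
      constructor
      · rintro h ⟨w, ⟨x, hx, hwx⟩, hzw⟩
        exact h x hx ⟨w, hzw, hwx⟩
      · rintro h x hx ⟨w, hzw, hwx⟩
        exact h ⟨w, ⟨x, hx, hwx⟩, hzw⟩

end SDL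
end
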